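/- For all n ≥ 7 and m ≥ 7, the grid graph P_n □ P_m is not efficiently dominatable. -/

import Mathlib

open SimpleGraph

/-- The closed neighborhood `N[v]` of a vertex. -/
def closedNbhd {V : Type*} (G : SimpleGraph V) (v : V) : Set V :=
  insert v (G.neighborSet v)

/-- `S` is an efficient dominating set: `|N[v] ∩ S| = 1` for every vertex `v`. -/
def isEDS {V : Type*} (G : SimpleGraph V) (S : Set V) : Prop :=
  ∀ v : V, ∃! u : V, u ∈ S ∧ u ∈ closedNbhd G v

/-- `S` is a 2-packing: closed neighborhoods of distinct members are disjoint. -/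
def twoPacking {V : Type*} (G : SimpleGraph V) (S : Set V) : Prop :=
  S.Pairwise fun u v => Disjoint (closedNbhd G u) (closedNbhd G v)

/-- The influence of `S`: the number of vertices dominated by `S`. -/
noncomputable def influence {V : Type*} (G : SimpleGraph V) (S : Set V) : ℕ :=
  (⋃ v ∈ S, closedNbhd G v).ncard

/-- The efficient domination number `F(G)`: maximum influence of a 2-packing. -/
noncomputable def effDomNum {V : Type*} (G : SimpleGraph V) : ℕ :=
  sSup {n | ∃ S : Set V, twoPacking G S ∧ influence G S = n}

/-! ### Auxiliary machinery -/

/-- bit `j` of `x` -/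
def gbit (x j : ℕ) : ℕ := x / 2 ^ j % 2

/-- row constraint: middle row `r`, previous row `p`, next row `c`. -/
def okRow (p r c : ℕ) : Bool :=
  (List.range 6).all fun j =>
    gbit p j + (if 0 < j then gbit r (j - 1) else 0) + gbit r j + gbit r (j + 1) + gbit c j == 1

def gpairs : List (ℕ × ℕ) :=
  (List.range 128).flatMap fun r =>
    (List.range 128).filterMap fun c => if okRow 0 r c then some (r, c) else none

def gstep (L : List (ℕ × ℕ)) : List (ℕ × ℕ) :=
  L.flatMap fun pr =>
    (List.range 128).filterMap fun c => if okRow pr.1 pr.2 c then some (pr.2, c) else none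

set_option maxRecDepth 100000 in
theorem chainEmpty : gstep (gstep (gstep gpairs)) = [] := by decide

def enc (b : Fin 7 → Bool) : ℕ := ∑ j : Fin 7, if b j then 2 ^ (j : ℕ) else 0

set_option maxRecDepth 4000 in
lemma enc_lt : ∀ b : Fin 7 → Bool, enc b < 128 := by decide

set_option maxRecDepth 4000 in
lemma enc_bit : ∀ (b : Fin 7 → Bool) (j : Fin 7),
    gbit (enc b) (j : ℕ) = if b j then 1 else 0 := by decide

lemma mem_gpairs {r c : ℕ} (hr : r < 128) (hc : c < 128) (h : okRow 0 r c = true) :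
    (r, c) ∈ gpairs := by
  simp only [gpairs, List.mem_flatMap, List.mem_filterMap, List.mem_range]
  exact ⟨r, hr, c, hc, by simp [h]⟩

lemma mem_gstep {L : List (ℕ × ℕ)} {p r c : ℕ} (h : (p, r) ∈ L) (hc : c < 128)
    (hok : okRow p r c = true) : (r, c) ∈ gstep L := by
  simp only [gstep, List.mem_flatMap, List.mem_filterMap, List.mem_range]
  exact ⟨(p, r), h, c, hc, by simp [hok]⟩

lemma core (f : ℕ → ℕ → Bool)
    (h : ∀ i j, i < 4 → j < 6 →
      (if 0 < i then (if f (i - 1) j = true then 1 else 0) else 0)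
        + (if 0 < j then (if f i (j - 1) = true then 1 else 0) else 0)
        + (if f i j = true then 1 else 0)
        + (if f i (j + 1) = true then 1 else 0)
        + (if f (i + 1) j = true then 1 else 0) = 1) : False := by
  set r : ℕ → ℕ := fun i => enc (fun j => f i j.val) with hr
  have hbit : ∀ i j, j < 7 → gbit (r i) j = if f i j = true then 1 else 0 := by
    intro i j hj
    simpa using enc_bit (fun k => f i k.val) ⟨j, hj⟩
  have hok : ∀ p i, i < 4 →
      (∀ j, j < 7 → gbit p j = if 0 < i then (if f (i - 1) j = true then 1 else 0) else 0) →
      okRow p (r i) (r (i + 1)) = true := by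
    intro p i hi hp
    simp only [okRow, List.all_eq_true, List.mem_range, beq_iff_eq]
    intro j hj
    rw [hbit i j (by omega), hbit i (j + 1) (by omega), hbit (i + 1) j (by omega),
      hp j (by omega)]
    by_cases hj0 : 0 < j
    · rw [if_pos hj0, hbit i (j - 1) (by omega)]
      have := h i j hi (by omega)
      rw [if_pos hj0] at this
      exact this
    · rw [if_neg hj0]
      have := h i j hi (by omega)
      rw [if_neg hj0] at this
      exact this
  have hk0 : okRow 0 (r 0) (r 1) = true := by
    apply hok 0 0 (by omega)
    intro j hj; simp [gbit]
  have hk1 : okRow (r 0) (r 1) (r 2) = true := by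
    apply hok (r 0) 1 (by omega)
    intro j hj; simpa using hbit 0 j hj
  have hk2 : okRow (r 1) (r 2) (r 3) = true := by
    apply hok (r 1) 2 (by omega)
    intro j hj; simpa using hbit 1 j hj
  have hk3 : okRow (r 2) (r 3) (r 4) = true := by
    apply hok (r 2) 3 (by omega)
    intro j hj; simpa using hbit 2 j hj
  have m3 : (r 3, r 4) ∈ gstep (gstep (gstep gpairs)) :=
    mem_gstep (mem_gstep (mem_gstep (mem_gpairs (enc_lt _) (enc_lt _) hk0)
      (enc_lt _) hk1) (enc_lt _) hk2) (enc_lt _) hk3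
  rw [chainEmpty] at m3
  exact absurd m3 List.not_mem_nil

set_option maxHeartbeats 1000000 in
theorem stmt11 (n m : ℕ) (hn : 7 ≤ n) (hm : 7 ≤ m) :
    ¬ ∃ S : Set (Fin n × Fin m), isEDS (pathGraph n □ pathGraph m) S := by
  rintro ⟨S, hS⟩
  classical
  set V : ℕ → ℕ → Fin n × Fin m :=
    fun a b => (⟨min a 6, by omega⟩, ⟨min b 6, by omega⟩) with hV
  apply core (fun a b => decide (V a b ∈ S))
  intro i j hi hj
  obtain ⟨⟨⟨a0, ha0⟩, ⟨b0, hb0⟩⟩, ⟨huS, huN⟩, huni⟩ := hS (V i j)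
  set u : Fin n × Fin m := (⟨a0, ha0⟩, ⟨b0, hb0⟩) with hu
  have memN : ∀ w, w ∈ closedNbhd (pathGraph n □ pathGraph m) (V i j) ↔
      w = V i j ∨ (pathGraph n □ pathGraph m).Adj (V i j) w := by
    intro w; simp [closedNbhd]
  have hiff : ∀ w, w ∈ closedNbhd (pathGraph n □ pathGraph m) (V i j) → (w ∈ S ↔ w = u) := by
    intro w hw
    exact ⟨fun hws => huni w ⟨hws, hw⟩, fun he => he ▸ huS⟩
  have mem_c : ∀ a b, a < 7 → b < 7 →
      ((a = i ∧ b = j) ∨ (a = i ∧ (b + 1 = j ∨ b = j + 1)) ∨ ((a + 1 = i ∨ a = i + 1) ∧ b = j)) →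
      V a b ∈ closedNbhd (pathGraph n □ pathGraph m) (V i j) := by
    intro a b ha hb hc
    rw [memN]
    rcases hc with h | h
    · left
      simp only [hV, Prod.mk.injEq, Fin.mk.injEq]
      omega
    · right
      simp only [hV, boxProd_adj, pathGraph_adj, Fin.mk.injEq]
      omega
  have V5 : ∀ a b, a < 7 → b < 7 →
      V a b ∈ closedNbhd (pathGraph n □ pathGraph m) (V i j) →
      (if decide (V a b ∈ S) = true then (1 : ℕ) else 0) = if V a b = u then 1 else 0 := by
    intro a b ha hb hN
    by_cases h : V a b = u
    · have : V a b ∈ S := (hiff _ hN).2 h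
      simp [this, h, huS]
    · have : V a b ∉ S := fun hs => h ((hiff _ hN).1 hs)
      simp [this, h]
  have hu5 : (a0 = min i 6 ∧ b0 = min j 6) ∨ (a0 + 1 = min i 6 ∧ b0 = min j 6) ∨
      (a0 = min i 6 + 1 ∧ b0 = min j 6) ∨
      (a0 = min i 6 ∧ (b0 + 1 = min j 6 ∨ b0 = min j 6 + 1)) := by
    have h := (memN _).1 huN
    simp only [hu, hV, boxProd_adj, pathGraph_adj, Prod.mk.injEq, Fin.mk.injEq] at h
    omega
  rw [V5 (i - 1) j (by omega) (by omega) (mem_c _ _ (by omega) (by omega) (by omega)),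
    V5 i (j - 1) (by omega) (by omega) (mem_c _ _ (by omega) (by omega) (by omega)),
    V5 i j (by omega) (by omega) (mem_c _ _ (by omega) (by omega) (by omega)),
    V5 i (j + 1) (by omega) (by omega) (mem_c _ _ (by omega) (by omega) (by omega)),
    V5 (i + 1) j (by omega) (by omega) (mem_c _ _ (by omega) (by omega) (by omega))]
  simp only [hu, hV, Prod.mk.injEq, Fin.mk.injEq]
  split_ifs <;> omega
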